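/- If Φ₁, Φ₂, Φ₊ are real numbers with 0 ≤ Φ₊ ≤ π/4, |Φ₁| ≤ Φ₊, |Φ₂| ≤ Φ₊, Φ₁ + Φ₂ ≥ 0, and |Φ₁ − Φ₂| ≤ Φ₊, and θ := Φ₁ + Φ₂ − Φ₊ satisfies θ ≥ −π/2, then (sin θ − sin 2Φ₁) + (sin θ − sin 2Φ₂) ≤ 2 sin Φ₊ − 2 sin 2Φ₊. -/
import Mathlib


open Real

theorem stmt4 (Φ₁ Φ₂ Φp θ : ℝ)
    (hΦp0 : 0 ≤ Φp) (hΦp : Φp ≤ π / 4)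
    (h1 : |Φ₁| ≤ Φp) (h2 : |Φ₂| ≤ Φp)
    (hsum : 0 ≤ Φ₁ + Φ₂)
    (hdiff : |Φ₁ - Φ₂| ≤ Φp)
    (hθ : θ = Φ₁ + Φ₂ - Φp)
    (hθlow : -(π / 2) ≤ θ) :
    (Real.sin θ - Real.sin (2 * Φ₁)) + (Real.sin θ - Real.sin (2 * Φ₂))
      ≤ 2 * Real.sin Φp - 2 * Real.sin (2 * Φp) := by
  have hpi : (0:ℝ) < π := Real.pi_pos
  obtain ⟨h1a, h1b⟩ := abs_le.mp h1
  obtain ⟨h2a, h2b⟩ := abs_le.mp h2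
  -- |Φ₁ - Φ₂| ≤ 2Φp - s
  have habsd : |Φ₁ - Φ₂| ≤ 2 * Φp - (Φ₁ + Φ₂) := by
    rcases abs_cases (Φ₁ - Φ₂) with ⟨h, _⟩ | ⟨h, _⟩ <;> rw [h] <;> linarith
  have hs2 : Φ₁ + Φ₂ ≤ 2 * Φp := by
    have := abs_nonneg (Φ₁ - Φ₂); linarith
  -- cos bound
  have hcosd : Real.cos (2 * Φp - (Φ₁ + Φ₂)) ≤ Real.cos (Φ₁ - Φ₂) := by
    rw [← Real.cos_abs (Φ₁ - Φ₂)]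
    exact Real.cos_le_cos_of_nonneg_of_le_pi (abs_nonneg _) (by linarith) habsd
  have hsins : 0 ≤ Real.sin (Φ₁ + Φ₂) :=
    Real.sin_nonneg_of_nonneg_of_le_pi hsum (by linarith)
  -- product-to-sum identities
  have e1 : Real.sin (2 * Φ₁) + Real.sin (2 * Φ₂)
      = 2 * Real.sin (Φ₁ + Φ₂) * Real.cos (Φ₁ - Φ₂) := by
    have a := Real.sin_add (Φ₁ + Φ₂) (Φ₁ - Φ₂)
    have b := Real.sin_sub (Φ₁ + Φ₂) (Φ₁ - Φ₂)
    rw [show (Φ₁ + Φ₂) + (Φ₁ - Φ₂) = 2 * Φ₁ from by ring] at a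
    rw [show (Φ₁ + Φ₂) - (Φ₁ - Φ₂) = 2 * Φ₂ from by ring] at b
    linarith
  have e2 : 2 * Real.sin (Φ₁ + Φ₂) * Real.cos (2 * Φp - (Φ₁ + Φ₂))
      = Real.sin (2 * Φp) + Real.sin (2 * θ) := by
    have a := Real.sin_add (Φ₁ + Φ₂) (2 * Φp - (Φ₁ + Φ₂))
    have b := Real.sin_sub (Φ₁ + Φ₂) (2 * Φp - (Φ₁ + Φ₂))
    rw [show (Φ₁ + Φ₂) + (2 * Φp - (Φ₁ + Φ₂)) = 2 * Φp from by ring] at a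
    rw [show (Φ₁ + Φ₂) - (2 * Φp - (Φ₁ + Φ₂)) = 2 * θ from by rw [hθ]; ring] at b
    linarith
  have hB : Real.sin (2 * Φp) + Real.sin (2 * θ)
      ≤ Real.sin (2 * Φ₁) + Real.sin (2 * Φ₂) := by
    rw [e1, ← e2]
    have := mul_le_mul_of_nonneg_left hcosd (by linarith : (0:ℝ) ≤ 2 * Real.sin (Φ₁ + Φ₂))
    nlinarith [this]
  have hθub : θ ≤ Φp := by rw [hθ]; linarith
  have hsinΦp : 0 ≤ Real.sin Φp :=
    Real.sin_nonneg_of_nonneg_of_le_pi hΦp0 (by linarith)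
  have hcosΦp : Real.cos Φp ≤ 1 := Real.cos_le_one _
  -- key pointwise bound
  have hD : Real.sin θ - Real.sin θ * Real.cos θ
      ≤ Real.sin Φp - Real.sin Φp * Real.cos Φp := by
    rcases le_or_gt θ 0 with hle | hlt
    · have hsθ : Real.sin θ ≤ 0 :=
        Real.sin_nonpos_of_nonpos_of_neg_pi_le hle (by linarith)
      have hcθ : Real.cos θ ≤ 1 := Real.cos_le_one _
      nlinarith
    · have hsθ : Real.sin θ ≤ Real.sin Φp :=
        Real.sin_le_sin_of_le_of_le_pi_div_two (by linarith) (by linarith) hθub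
      have hsθ0 : 0 ≤ Real.sin θ :=
        Real.sin_nonneg_of_nonneg_of_le_pi (le_of_lt hlt) (by linarith)
      have hcθ : Real.cos Φp ≤ Real.cos θ :=
        Real.cos_le_cos_of_nonneg_of_le_pi (le_of_lt hlt) (by linarith) hθub
      have hcθ1 : Real.cos θ ≤ 1 := Real.cos_le_one _
      nlinarith
  have hc1 : Real.sin (2 * θ) = 2 * Real.sin θ * Real.cos θ := Real.sin_two_mul θ
  have hc2 : Real.sin (2 * Φp) = 2 * Real.sin Φp * Real.cos Φp := Real.sin_two_mul Φp
  linarith
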